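/- Let K be a (skew) field and γ: K → K a ring automorphism. The skew Laurent polynomial ring K_γ[t^{±1}] is a Euclidean ring with respect to the degree function: for all f, g ∈ K_γ[t^{±1}] with g ≠ 0, there exist a, r ∈ K_γ[t^{±1}] such that f = g·a + r and either r = 0 or deg(r) < deg(g). -/

import Mathlib

/-- A model of the skew Laurent polynomial ring `K_γ[t^{±1}]`: a ring `R` together with
an embedding `ι : K → R`, a unit `t` satisfying `t * ι a = ι (γ a) * t`, such that the
elements `ι a * t^i` form a basis, i.e. every element of `R` is uniquely a finite sum
`∑ ι aᵢ * t^i`. -/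
structure SkewLaurent (K : Type) [DivisionRing K] (γ : K ≃+* K) (R : Type) [Ring R] where
  ι : K →+* R
  t : Rˣ
  tcomm : ∀ a : K, (t : R) * ι a = ι (γ a) * (t : R)
  repr : (ℤ →₀ K) ≃+ R
  repr_single : ∀ (i : ℤ) (a : K), repr (Finsupp.single i a) = ι a * ((t ^ i : Rˣ) : R)

namespace SkewLaurent
variable {K : Type} [DivisionRing K] {γ : K ≃+* K} {R : Type} [Ring R]

/-- The degree `n - m` of a nonzero skew Laurent polynomial `∑_{i=m}^n aᵢ t^i`
(with `a_m ≠ 0`, `a_n ≠ 0`); junk value `0` for `f = 0`. -/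
noncomputable def deg (S : SkewLaurent K γ R) (f : R) : ℤ :=
  if h : (S.repr.symm f).support.Nonempty then
    (S.repr.symm f).support.max' h - (S.repr.symm f).support.min' h
  else 0

/-- `t⁻¹` commutation rule. -/
lemma tinv_comm (S : SkewLaurent K γ R) (a : K) :
    ((S.t⁻¹ : Rˣ) : R) * S.ι a = S.ι (γ.symm a) * ((S.t⁻¹ : Rˣ) : R) := by
  have h := S.tcomm (γ.symm a)
  rw [RingEquiv.apply_symm_apply] at h
  calc ((S.t⁻¹ : Rˣ) : R) * S.ι a
      = ((S.t⁻¹ : Rˣ) : R) * (S.ι a * (S.t : R) * ((S.t⁻¹ : Rˣ) : R)) := by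
        rw [mul_assoc (S.ι a), S.t.mul_inv, mul_one]
    _ = ((S.t⁻¹ : Rˣ) : R) * ((S.t : R) * S.ι (γ.symm a) * ((S.t⁻¹ : Rˣ) : R)) := by rw [h]
    _ = S.ι (γ.symm a) * ((S.t⁻¹ : Rˣ) : R) := by
        rw [← mul_assoc, ← mul_assoc, S.t.inv_mul, one_mul]

/-- `t^k` commutation rule for all `k : ℤ`. -/
lemma t_zpow_comm (S : SkewLaurent K γ R) (k : ℤ) (a : K) :
    ((S.t ^ k : Rˣ) : R) * S.ι a = S.ι ((γ ^ k) a) * ((S.t ^ k : Rˣ) : R) := by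
  induction k using Int.induction_on generalizing a with
  | zero =>
      simp
  | succ n ih =>
      have ht : (S.t ^ ((n : ℤ) + 1) : Rˣ) = S.t ^ (n : ℤ) * S.t := by rw [zpow_add_one]
      have hγ : (γ ^ ((n : ℤ) + 1)) a = (γ ^ (n : ℤ)) (γ a) := by rw [zpow_add_one]; rfl
      rw [ht, Units.val_mul, mul_assoc, S.tcomm, ← mul_assoc, ih (γ a), hγ, mul_assoc]
  | pred n ih =>
      have ht : (S.t ^ (-(n : ℤ) - 1) : Rˣ) = S.t ^ (-(n : ℤ)) * S.t⁻¹ := by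
        rw [← zpow_neg_one, ← zpow_add]; ring_nf
      have hγ : (γ ^ (-(n : ℤ) - 1)) a = (γ ^ (-(n : ℤ))) (γ.symm a) := by
        have h2 : (γ ^ (-(n : ℤ) - 1)) = γ ^ (-(n : ℤ)) * γ⁻¹ := by
          rw [← zpow_neg_one, ← zpow_add]; ring_nf
        rw [h2]; rfl
      rw [ht, Units.val_mul, mul_assoc, S.tinv_comm, ← mul_assoc, ih (γ.symm a), hγ,
        mul_assoc]

/-- The effect of right multiplication by the monomial `ι c * t^k` on coefficients. -/
noncomputable def shift (γ : K ≃+* K) (c : K) (k : ℤ) (p : ℤ →₀ K) : ℤ →₀ K :=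
  p.sum fun i a => Finsupp.single (i + k) (a * (γ ^ i) c)

lemma shift_apply (c : K) (k : ℤ) (p : ℤ →₀ K) (j : ℤ) :
    shift γ c k p j = p (j - k) * (γ ^ (j - k)) c := by
  classical
  rw [shift, Finsupp.sum_apply, Finsupp.sum]
  rw [Finset.sum_eq_single (j - k)]
  · rw [Finsupp.single_apply, if_pos (by ring)]
  · intro i _ hne
    rw [Finsupp.single_apply, if_neg (by omega)]
  · intro h
    rw [Finsupp.notMem_support_iff.mp h, zero_mul, Finsupp.single_zero, Finsupp.coe_zero,
      Pi.zero_apply]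

lemma repr_mul_monomial (S : SkewLaurent K γ R) (c : K) (k : ℤ) (p : ℤ →₀ K) :
    S.repr p * (S.ι c * ((S.t ^ k : Rˣ) : R)) = S.repr (shift γ c k p) := by
  classical
  induction p using Finsupp.induction with
  | zero => simp [shift]
  | single_add i a q hiq ha0 ih =>
      have hadd : shift γ c k (Finsupp.single i a + q)
          = shift γ c k (Finsupp.single i a) + shift γ c k q := by
        unfold shift
        rw [Finsupp.sum_add_index]
        · intro i _; simp
        · intro i _ b₁ b₂; rw [add_mul, Finsupp.single_add]
      have hsingle : shift γ c k (Finsupp.single i a)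
          = Finsupp.single (i + k) (a * (γ ^ i) c) := by
        unfold shift
        rw [Finsupp.sum_single_index]
        simp
      rw [map_add, add_mul, ih, hadd, map_add, hsingle]
      congr 1
      rw [S.repr_single, S.repr_single, mul_assoc, ← mul_assoc ((S.t ^ i : Rˣ) : R),
        S.t_zpow_comm, mul_assoc, ← Units.val_mul, ← zpow_add, ← mul_assoc, ← map_mul]

lemma mul_monomial (S : SkewLaurent K γ R) (c : K) (k : ℤ) (x : R) :
    x * (S.ι c * ((S.t ^ k : Rˣ) : R)) = S.repr (shift γ c k (S.repr.symm x)) := by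
  conv_lhs => rw [← S.repr.apply_symm_apply x]
  rw [S.repr_mul_monomial]

end SkewLaurent

/-- The skew Laurent polynomial ring `K_γ[t^{±1}]` is Euclidean with
respect to the degree function: for all `f, g` with `g ≠ 0` there are `a, r` with
`f = g * a + r` and either `r = 0` or `deg r < deg g`. -/
theorem skewLaurent_euclidean
    (K : Type) [DivisionRing K] (γ : K ≃+* K) (R : Type) [Ring R]
    (S : SkewLaurent K γ R) (f g : R) (hg : g ≠ 0) :
    ∃ a r : R, f = g * a + r ∧ (r = 0 ∨ S.deg r < S.deg g) := by
  classical
  have symm_eq_zero : ∀ x : R, S.repr.symm x = 0 ↔ x = 0 := fun x =>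
    ⟨fun h => by simpa using congrArg S.repr h, fun h => by simp [h]⟩
  set Q := S.repr.symm g with hQdef
  have hQ : Q ≠ 0 := fun h => hg ((symm_eq_zero g).mp h)
  have hQne : Q.support.Nonempty := Finsupp.support_nonempty_iff.mpr hQ
  set ng := Q.support.max' hQne with hngdef
  set mg := Q.support.min' hQne with hmgdef
  have hb : Q ng ≠ 0 := Finsupp.mem_support_iff.mp (Q.support.max'_mem hQne)
  have hmng : mg ≤ ng := Q.support.min'_le ng (Q.support.max'_mem hQne)
  have hdegg : S.deg g = ng - mg := by
    rw [SkewLaurent.deg, ← hQdef, dif_pos hQne]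
  have Qhi : ∀ j, ng < j → Q j = 0 := fun j h => by
    by_contra hne
    exact absurd (Q.support.le_max' j (Finsupp.mem_support_iff.mpr hne)) (not_le.mpr h)
  have Qlo : ∀ j, j < mg → Q j = 0 := fun j h => by
    by_contra hne
    exact absurd (Q.support.min'_le j (Finsupp.mem_support_iff.mpr hne)) (not_le.mpr h)
  suffices H : ∀ N : ℕ, ∀ f : R, (S.deg f).toNat ≤ N →
      ∃ a r : R, f = g * a + r ∧ (r = 0 ∨ S.deg r < S.deg g) by
    exact H (S.deg f).toNat f le_rfl
  intro N
  induction N using Nat.strong_induction_on with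
  | _ N IH =>
    intro f hfN
    by_cases hf0 : f = 0
    · exact ⟨0, 0, by simp [hf0], Or.inl rfl⟩
    set P := S.repr.symm f with hPdef
    have hP : P ≠ 0 := fun h => hf0 ((symm_eq_zero f).mp h)
    have hPne : P.support.Nonempty := Finsupp.support_nonempty_iff.mpr hP
    set nf := P.support.max' hPne with hnfdef
    set mf := P.support.min' hPne with hmfdef
    have hmnf : mf ≤ nf := P.support.min'_le nf (P.support.max'_mem hPne)
    have hdegf : S.deg f = nf - mf := by
      rw [SkewLaurent.deg, ← hPdef, dif_pos hPne]
    by_cases hlt : S.deg f < S.deg g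
    · exact ⟨0, f, by simp, Or.inr hlt⟩
    push_neg at hlt
    have Phi : ∀ j, nf < j → P j = 0 := fun j h => by
      by_contra hne
      exact absurd (P.support.le_max' j (Finsupp.mem_support_iff.mpr hne)) (not_le.mpr h)
    have Plo : ∀ j, j < mf → P j = 0 := fun j h => by
      by_contra hne
      exact absurd (P.support.min'_le j (Finsupp.mem_support_iff.mpr hne)) (not_le.mpr h)
    -- the monomial to subtract
    set A := P nf with hAdef
    set k := nf - ng with hkdef
    set c := (γ ^ (-ng)) ((Q ng)⁻¹ * A) with hcdef
    have hγc : (γ ^ ng) c = (Q ng)⁻¹ * A := by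
      rw [hcdef]
      have : (γ ^ ng) ((γ ^ (-ng)) ((Q ng)⁻¹ * A)) = (γ ^ (ng + -ng)) ((Q ng)⁻¹ * A) := by
        rw [zpow_add]; rfl
      rw [this, add_neg_cancel, zpow_zero]; rfl
    set X := S.ι c * ((S.t ^ k : Rˣ) : R) with hXdef
    set q := SkewLaurent.shift γ c k Q with hqdef
    have hgX : g * X = S.repr q := by rw [hXdef, S.mul_monomial, ← hQdef]
    set f' := f - g * X with hf'def
    have hP' : S.repr.symm f' = P - q := by
      rw [hf'def, map_sub, hgX, S.repr.symm_apply_apply, ← hPdef]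
    -- coefficient computations
    have hqj : ∀ j : ℤ, q j = Q (j - k) * (γ ^ (j - k)) c := fun j =>
      SkewLaurent.shift_apply c k Q j
    have key_hi : ∀ j, nf ≤ j → P j - q j = 0 := by
      intro j hj
      rcases eq_or_lt_of_le hj with h | h
      · subst h
        rw [hqj, hkdef, show nf - (nf - ng) = ng by ring, hγc,
          mul_inv_cancel_left₀ hb, ← hAdef, sub_self]
      · rw [Phi j h, hqj, Qhi (j - k) (by omega), zero_mul, sub_zero]
    have key_lo : ∀ j, j < mf → P j - q j = 0 := by
      intro j hj
      have hdeg_ineq : ng - mg ≤ nf - mf := by rw [← hdegg, ← hdegf]; exact hlt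
      rw [Plo j hj, hqj, Qlo (j - k) (by omega), zero_mul, sub_zero]
    have hsupp : ∀ j ∈ (P - q).support, mf ≤ j ∧ j < nf := by
      intro j hj
      rw [Finsupp.mem_support_iff, Finsupp.sub_apply] at hj
      exact ⟨le_of_not_gt fun h => hj (key_lo j h), lt_of_not_ge fun h => hj (key_hi j h)⟩
    by_cases hf'0 : f' = 0
    · refine ⟨X, 0, ?_, Or.inl rfl⟩
      have : f = g * X := by
        have := sub_eq_zero.mp (hf'def ▸ hf'0)
        exact this
      rw [add_zero]; exact this
    · have hP'ne : (P - q).support.Nonempty := by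
        apply Finsupp.support_nonempty_iff.mpr
        rw [← hP']
        exact fun h => hf'0 ((symm_eq_zero f').mp h)
      have hdegf' : S.deg f' = (P - q).support.max' hP'ne - (P - q).support.min' hP'ne := by
        rw [SkewLaurent.deg, hP', dif_pos hP'ne]
      have hmax : (P - q).support.max' hP'ne ≤ nf - 1 := by
        apply Finset.max'_le
        intro j hj
        have := (hsupp j hj).2
        omega
      have hmin : mf ≤ (P - q).support.min' hP'ne :=
        (hsupp _ ((P - q).support.min'_mem hP'ne)).1
      have hminmax : (P - q).support.min' hP'ne ≤ (P - q).support.max' hP'ne :=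
        (P - q).support.min'_le _ ((P - q).support.max'_mem hP'ne)
      have hdeglt : S.deg f' < S.deg f := by rw [hdegf', hdegf]; omega
      have hdegnn : 0 ≤ S.deg f' := by rw [hdegf']; omega
      have hdeggnn : 0 ≤ S.deg g := by rw [hdegg]; omega
      have hdegfnn : 0 ≤ S.deg f := le_trans hdeggnn hlt
      obtain ⟨a', r', hfr, hr⟩ := IH (S.deg f').toNat (by omega) f' le_rfl
      refine ⟨X + a', r', ?_, hr⟩
      have hsplit : f = g * X + f' := by rw [hf'def]; abel
      rw [mul_add, hsplit, hfr, add_assoc]
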